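/- The closed unit ball of E = (⊕_{n=1}^∞ ℓ_2^n)_{c_0} is not an almost limited set: there is a disjoint weak* null sequence (f_n) in E' with sup_{x ∈ B_E} |f_n(x)| = 1 for all n. -/
import Mathlib


open Filter Topology

noncomputable section

/-- The `n`-th block: the Euclidean lattice `ℓ₂^(n+1)` (so `n` ranges over all positive
dimensions). -/
abbrev Blk (n : ℕ) := EuclideanSpace ℝ (Fin (n + 1))

/-- Sequences of blocks; the ambient product in which `E`, `E'` and `E''` live. -/
abbrev PreE := ∀ n, Blk n

/-- The coordinatewise (lattice) order. -/
def ele (x y : PreE) : Prop := ∀ n i, x n i ≤ y n i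

/-- Membership in `E = (⊕ ℓ₂ⁿ)_{c₀}`: block norms tend to zero. -/
def memE0 (x : PreE) : Prop := Tendsto (fun n => ‖x n‖) atTop (𝓝 0)

/-- Membership in `E' = (⊕ ℓ₂ⁿ)_{ℓ₁}`: block norms are summable. -/
def memE1 (x : PreE) : Prop := Summable fun n => ‖x n‖

/-- The duality pairing `⟨f, x⟩ = Σₙ Σᵢ f n i * x n i`. -/
def pairE (f x : PreE) : ℝ := ∑' n, ∑ i, f n i * x n i

/-- `E'' = (⊕ ℓ₂ⁿ)_{ℓ_∞}`, the ℓ∞-sum, as a genuine Banach space. -/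
abbrev Epp := ↥(lp Blk ⊤)

/-- The diagonal unit vectors: `dg n` is `1` in the last coordinate of block `n`, `0` elsewhere. -/
def dg (n : ℕ) : PreE := fun m => if m = n then EuclideanSpace.single (Fin.last m) 1 else 0

lemma dg_apply_ne (k m : ℕ) (h : m ≠ k) : dg k m = 0 := by simp [dg, h]

lemma pairE_dg (k : ℕ) (x : PreE) : pairE (dg k) x = x k (Fin.last k) := by
  unfold pairE
  rw [tsum_eq_single k]
  · simp [dg, EuclideanSpace.single_apply]
  · intro n hn
    simp [dg_apply_ne k n hn]

lemma norm_dg (k m : ℕ) : ‖dg k m‖ = if m = k then 1 else 0 := by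
  rcases eq_or_ne m k with h | h
  · subst h; simp [dg, EuclideanSpace.norm_single]
  · simp [dg_apply_ne k m h, h]

lemma coord_le_norm {n : ℕ} (y : Blk n) (i : Fin (n + 1)) : |y i| ≤ ‖y‖ := by
  have h := abs_real_inner_le_norm (EuclideanSpace.single i (1 : ℝ)) y
  simpa [EuclideanSpace.inner_single_left, EuclideanSpace.norm_single] using h

/-- The closed unit ball of `E = (⊕ ℓ₂ⁿ)_{c₀}` is not almost limited: the diagonal coordinate
functionals `(dg k) ⊆ E'` form a disjoint weak* null sequence with
`sup_{x ∈ B_E} |⟨dg k, x⟩| = 1` for all `k`. -/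
theorem stmt_18 :
    (∀ k, memE1 (dg k)) ∧
    (Pairwise fun k j => ∀ n i, min |dg k n i| |dg j n i| = 0) ∧
    (∀ x : PreE, memE0 x → Tendsto (fun k => pairE (dg k) x) atTop (𝓝 0)) ∧
    (∀ k, sSup ((fun x => |pairE (dg k) x|) '' {x : PreE | memE0 x ∧ ∀ n, ‖x n‖ ≤ 1}) = 1) := by
  refine ⟨?_, ?_, ?_, ?_⟩
  · intro k
    apply summable_of_ne_finset_zero (s := {k})
    intro m hm
    simp only [Finset.mem_singleton] at hm
    simp [norm_dg, hm]
  · intro k j hkj n i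
    rcases eq_or_ne n k with rfl | hn
    · rw [dg_apply_ne j n (fun h => hkj h)]
      simp [min_eq_right, abs_nonneg]
    · rw [dg_apply_ne k n hn]
      simp [abs_nonneg]
  · intro x hx
    simp only [pairE_dg]
    have hb : ∀ k, |x k (Fin.last k)| ≤ ‖x k‖ := fun k => coord_le_norm _ _
    refine squeeze_zero_norm (fun k => ?_) hx
    simpa using hb _
  · intro k
    apply IsGreatest.csSup_eq
    constructor
    · refine ⟨dg k, ⟨?_, fun n => by rw [norm_dg]; split <;> norm_num⟩, ?_⟩
      · have : ∀ᶠ m in atTop, ‖dg k m‖ = 0 := by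
          filter_upwards [eventually_gt_atTop k] with m hm
          rw [norm_dg]; simp [Nat.ne_of_gt hm]
        exact Tendsto.congr' (by filter_upwards [this] with m hm using hm.symm)
          tendsto_const_nhds
      · show |pairE (dg k) (dg k)| = 1
        rw [pairE_dg]
        simp [dg, EuclideanSpace.single_apply]
    · rintro y ⟨x, ⟨-, hx1⟩, rfl⟩
      show |pairE (dg k) x| ≤ 1
      rw [pairE_dg]
      exact (coord_le_norm _ _).trans (hx1 k)
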